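/- Fix ε_abs > 0. If γ ∈ ℝ satisfies ĥ₋,γ(ĝ₋,γ) ≥ 0, then ĥ₋,γ(ĝ₋,γ)/ε_abs − γ ≤ MR̂(f) for every f ∈ ℱ with ê_orig(f) ≤ ε_abs, and moreover −γ ≤ MR̂(f) for every f ∈ ℱ. Additionally, if either ĥ₋,γ(ĝ₋,γ) = 0 or ê_orig(ĝ₋,γ) = ε_abs, then ĥ₋,γ(ĝ₋,γ)/ε_abs − γ = MR̂(ĝ₋,γ). -/

import Mathlib

/-- Lemma 7 (lower bound for empirical model reliance via a binary search step).
`eorig`, `eswitch` are the empirical original and switched losses on a model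
class `F`; `MR̂(f) = eswitch f / eorig f`; `ĥ₋,γ(f) = γ·eorig f + eswitch f`
and `g` is a minimizer of `ĥ₋,γ` over `F`. -/
theorem stmt_10 {F : Type*} [Nonempty F]
    (eorig eswitch : F → ℝ)
    (horig : ∀ f, 0 < eorig f) (hswitch : ∀ f, 0 ≤ eswitch f)
    (εabs : ℝ) (hεabs : 0 < εabs)
    (γ : ℝ) (g : F)
    (hg : ∀ f, γ * eorig g + eswitch g ≤ γ * eorig f + eswitch f)
    (hpos : 0 ≤ γ * eorig g + eswitch g) :
    (∀ f, eorig f ≤ εabs →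
      (γ * eorig g + eswitch g) / εabs - γ ≤ eswitch f / eorig f) ∧
    (∀ f, -γ ≤ eswitch f / eorig f) ∧
    ((γ * eorig g + eswitch g = 0 ∨ eorig g = εabs) →
      (γ * eorig g + eswitch g) / εabs - γ = eswitch g / eorig g) := by
  refine ⟨?_, ?_, ?_⟩
  · intro f hf
    have h1 : (γ * eorig g + eswitch g) / εabs ≤ (γ * eorig g + eswitch g) / eorig f :=
      div_le_div_of_nonneg_left hpos (horig f) hf
    have h2 : (γ * eorig g + eswitch g) / eorig f ≤ (γ * eorig f + eswitch f) / eorig f :=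
      div_le_div_of_nonneg_right (hg f) (horig f).le
    have h3 : (γ * eorig f + eswitch f) / eorig f = γ + eswitch f / eorig f := by
      field_simp [(horig f).ne']
    linarith
  · intro f
    have h0 : 0 ≤ γ * eorig f + eswitch f := le_trans hpos (hg f)
    have := div_nonneg h0 (horig f).le
    have h3 : (γ * eorig f + eswitch f) / eorig f = γ + eswitch f / eorig f := by
      field_simp [(horig f).ne']
    linarith
  · rintro (h | h)
    · rw [h]
      have : eswitch g = -(γ * eorig g) := by linarith
      rw [this]
      field_simp [(horig g).ne']
      ring
    · rw [h]
      field_simp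
      ring
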